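/- Let V be a finite-dimensional real vector space, A : V³ → ℝ trilinear, B : V⁴ → ℝ quadrilinear satisfying B(a,b,c,d) = −B(b,a,c,d), B(a,b,c,d) = −B(a,b,d,c) and B(a,b,c,d) = B(c,d,a,b), P a symmetric bilinear form on V*, and n ∈ V. Fix z ∈ ℝ with z ≠ 0 and ζ ∈ V, and define the gauge-transformed objects: A′(b,c,d) := z(A(b,c,d) + B(ζ,b,c,d)); B′ := B; n′ := z⁻¹n; and P′(α,β) := P(α,β) − α(ζ)β(n) − β(ζ)α(n) for α, β ∈ V*. Let ℛ, J, H be the constraint tensor and its contractions built from (A,B,P,n), and ℛ′, J′, H′ those built from (A′,B′,P′,n′). Then: (1) ℛ′ = ℛ; (2) J′ = z⁻¹ J; (3) H′ = H + J(ζ). -/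

import Mathlib

/-- The full contraction `⟨T, P⟩` of a bilinear form `T` on `V` with a bilinear form `P` on
`V*`: the trace of the endomorphism `P̂ ∘ T̂` of `V`, where `T̂ : V → V*` is `v ↦ T(v,·)` and
`P̂ : V* → V` is the linear map determined by `β(P̂(α)) = P(α,β)` for all `β ∈ V*`. -/
noncomputable def contr {V : Type*} [AddCommGroup V] [Module ℝ V] [FiniteDimensional ℝ V]
    (P : Module.Dual ℝ V →ₗ[ℝ] Module.Dual ℝ V →ₗ[ℝ] ℝ) :
    (V →ₗ[ℝ] Module.Dual ℝ V) →ₗ[ℝ] ℝ :=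
  (LinearMap.trace ℝ V).comp
    (LinearMap.llcomp ℝ V (Module.Dual ℝ V) V
      ((Module.evalEquiv ℝ V).symm.toLinearMap.comp P))

/-- For a quadrilinear map `B` and `a b : V`, the bilinear form `B(a,·,b,·) : (c,d) ↦ B(a,c,b,d)`. -/
noncomputable def sliceB {V : Type*} [AddCommGroup V] [Module ℝ V]
    (B : V →ₗ[ℝ] V →ₗ[ℝ] V →ₗ[ℝ] V →ₗ[ℝ] ℝ) (a b : V) :
    V →ₗ[ℝ] Module.Dual ℝ V :=
  LinearMap.mk₂ ℝ (fun c d => B a c b d)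
    (fun c c' d => by simp)
    (fun r c d => by simp)
    (fun c d d' => by simp)
    (fun r c d => by simp)

lemma sliceB_add_left {V : Type*} [AddCommGroup V] [Module ℝ V]
    (B : V →ₗ[ℝ] V →ₗ[ℝ] V →ₗ[ℝ] V →ₗ[ℝ] ℝ) (a a' b : V) :
    sliceB B (a + a') b = sliceB B a b + sliceB B a' b := by
  ext c d; simp [sliceB]

lemma sliceB_smul_left {V : Type*} [AddCommGroup V] [Module ℝ V]
    (B : V →ₗ[ℝ] V →ₗ[ℝ] V →ₗ[ℝ] V →ₗ[ℝ] ℝ) (r : ℝ) (a b : V) :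
    sliceB B (r • a) b = r • sliceB B a b := by
  ext c d; simp [sliceB]

lemma sliceB_add_right {V : Type*} [AddCommGroup V] [Module ℝ V]
    (B : V →ₗ[ℝ] V →ₗ[ℝ] V →ₗ[ℝ] V →ₗ[ℝ] ℝ) (a b b' : V) :
    sliceB B a (b + b') = sliceB B a b + sliceB B a b' := by
  ext c d; simp [sliceB]

lemma sliceB_smul_right {V : Type*} [AddCommGroup V] [Module ℝ V]
    (B : V →ₗ[ℝ] V →ₗ[ℝ] V →ₗ[ℝ] V →ₗ[ℝ] ℝ) (r : ℝ) (a b : V) :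
    sliceB B a (r • b) = r • sliceB B a b := by
  ext c d; simp [sliceB]

/-- The constraint tensor `ℛ(a,b) := ⟨B(a,·,b,·), P⟩ − A(b,a,n) − A(a,b,n)`, as a bilinear
form on `V`. -/
noncomputable def constraintTensor {V : Type*} [AddCommGroup V] [Module ℝ V]
    [FiniteDimensional ℝ V]
    (A : V →ₗ[ℝ] V →ₗ[ℝ] V →ₗ[ℝ] ℝ)
    (B : V →ₗ[ℝ] V →ₗ[ℝ] V →ₗ[ℝ] V →ₗ[ℝ] ℝ)
    (P : Module.Dual ℝ V →ₗ[ℝ] Module.Dual ℝ V →ₗ[ℝ] ℝ) (n : V) :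
    V →ₗ[ℝ] V →ₗ[ℝ] ℝ :=
  LinearMap.mk₂ ℝ (fun a b => contr P (sliceB B a b) - A b a n - A a b n)
    (fun a a' b => by
      simp only [sliceB_add_left, map_add, LinearMap.add_apply]
      ring)
    (fun r a b => by
      simp only [sliceB_smul_left, map_smul, LinearMap.smul_apply, smul_eq_mul]
      ring)
    (fun a b b' => by
      simp only [sliceB_add_right, map_add, LinearMap.add_apply]
      ring)
    (fun r a b => by
      simp only [sliceB_smul_right, map_smul, LinearMap.smul_apply, smul_eq_mul]
      ring)

/-- The gauge-transformed `P`: `P′(α,β) = P(α,β) − α(ζ)β(n) − β(ζ)α(n)`. -/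
noncomputable def gaugeP {V : Type*} [AddCommGroup V] [Module ℝ V]
    (P : Module.Dual ℝ V →ₗ[ℝ] Module.Dual ℝ V →ₗ[ℝ] ℝ) (ζ n : V) :
    Module.Dual ℝ V →ₗ[ℝ] Module.Dual ℝ V →ₗ[ℝ] ℝ :=
  LinearMap.mk₂ ℝ (fun α β => P α β - α ζ * β n - β ζ * α n)
    (fun α α' β => by
      simp only [map_add, LinearMap.add_apply]
      ring)
    (fun r α β => by
      simp only [map_smul, LinearMap.smul_apply, smul_eq_mul]
      ring)
    (fun α β β' => by
      simp only [map_add, LinearMap.add_apply]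
      ring)
    (fun r α β => by
      simp only [map_smul, LinearMap.smul_apply, smul_eq_mul]
      ring)


section Aux

variable {V : Type*} [AddCommGroup V] [Module ℝ V]

lemma contr_eq_sum [FiniteDimensional ℝ V]
    {ι : Type*} [Fintype ι] [DecidableEq ι] (b : Module.Basis ι ℝ V)
    (P : Module.Dual ℝ V →ₗ[ℝ] Module.Dual ℝ V →ₗ[ℝ] ℝ)
    (T : V →ₗ[ℝ] Module.Dual ℝ V) :
    contr P T = ∑ i, ∑ j, T (b i) (b j) * P (b.coord j) (b.coord i) := by
  have h1 : contr P T
      = LinearMap.trace ℝ V ((Module.evalEquiv ℝ V).symm.toLinearMap ∘ₗ P ∘ₗ T) := rfl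
  rw [h1, LinearMap.trace_eq_matrix_trace ℝ b, Matrix.trace]
  simp only [Matrix.diag, LinearMap.toMatrix_apply]
  refine Finset.sum_congr rfl fun i _ => ?_
  have h2 : b.repr ((Module.evalEquiv ℝ V).symm (P (T (b i)))) i
      = b.coord i ((Module.evalEquiv ℝ V).symm (P (T (b i)))) := rfl
  rw [show (((Module.evalEquiv ℝ V).symm.toLinearMap ∘ₗ P ∘ₗ T) (b i)) =
    (Module.evalEquiv ℝ V).symm (P (T (b i))) from rfl]
  rw [h2, Module.apply_evalEquiv_symm_apply]
  conv_lhs => rw [← Module.Basis.sum_dual_apply_smul_coord b (T (b i))]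
  rw [map_sum, LinearMap.sum_apply]
  simp only [map_smul, LinearMap.smul_apply, smul_eq_mul]

lemma sum_coord_mul {ι : Type*} [Fintype ι] (b : Module.Basis ι ℝ V)
    (f : Module.Dual ℝ V) (v : V) :
    ∑ j, f (b j) * b.coord j v = f v := by
  conv_rhs => rw [← Module.Basis.sum_dual_apply_smul_coord b f]
  rw [LinearMap.sum_apply]
  simp only [LinearMap.smul_apply, smul_eq_mul]

lemma contr_gaugeP [FiniteDimensional ℝ V]
    (P : Module.Dual ℝ V →ₗ[ℝ] Module.Dual ℝ V →ₗ[ℝ] ℝ) (ζ n : V)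
    (T : V →ₗ[ℝ] Module.Dual ℝ V) :
    contr (gaugeP P ζ n) T = contr P T - T n ζ - T ζ n := by
  classical
  let b := Module.Free.chooseBasis ℝ V
  rw [contr_eq_sum b, contr_eq_sum b]
  have hgp : ∀ i j, gaugeP P ζ n (b.coord j) (b.coord i)
      = P (b.coord j) (b.coord i) - b.coord j ζ * b.coord i n - b.coord i ζ * b.coord j n := by
    intro i j; rfl
  simp only [hgp, mul_sub]
  simp only [Finset.sum_sub_distrib]
  have h1 : ∑ i, ∑ j, T (b i) (b j) * (b.coord j ζ * b.coord i n) = T n ζ := by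
    have hinner : ∀ i, ∑ j, T (b i) (b j) * (b.coord j ζ * b.coord i n)
        = T (b i) ζ * b.coord i n := by
      intro i
      simp_rw [← mul_assoc]
      rw [← Finset.sum_mul, sum_coord_mul]
    simp_rw [hinner]
    exact sum_coord_mul b (T.flip ζ) n
  have h2 : ∑ i, ∑ j, T (b i) (b j) * (b.coord i ζ * b.coord j n) = T ζ n := by
    have hinner : ∀ i, ∑ j, T (b i) (b j) * (b.coord i ζ * b.coord j n)
        = T (b i) n * b.coord i ζ := by
      intro i
      simp_rw [mul_left_comm _ (b.coord i ζ) _, mul_comm (b.coord i ζ)]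
      rw [← Finset.sum_mul, sum_coord_mul]
    simp_rw [hinner]
    exact sum_coord_mul b (T.flip n) ζ
  rw [h1, h2]

lemma contr_flip [FiniteDimensional ℝ V]
    (P : Module.Dual ℝ V →ₗ[ℝ] Module.Dual ℝ V →ₗ[ℝ] ℝ)
    (hPsymm : ∀ α β : Module.Dual ℝ V, P α β = P β α)
    (T : V →ₗ[ℝ] Module.Dual ℝ V) :
    contr P T.flip = contr P T := by
  classical
  let b := Module.Free.chooseBasis ℝ V
  rw [contr_eq_sum b, contr_eq_sum b, Finset.sum_comm]
  refine Finset.sum_congr rfl fun i _ => Finset.sum_congr rfl fun j _ => ?_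
  simp only [LinearMap.flip_apply]
  rw [hPsymm]

end Aux

/-- Gauge covariance of the constraint tensor and its contractions: with
`A′ := z(A + i_ζ B)`, `B′ := B`, `n′ := z⁻¹n`, `P′(α,β) := P(α,β) − α(ζ)β(n) − β(ζ)α(n)`,
and `ℛ, J := ℛ(n,·), H := −½⟨ℛ,P⟩` (resp. the primed objects) built from `(A,B,P,n)`
(resp. `(A′,B′,P′,n′)`), one has `ℛ′ = ℛ`, `J′ = z⁻¹J` and `H′ = H + J(ζ)`. -/
theorem stmt_8 {V : Type*} [AddCommGroup V] [Module ℝ V] [FiniteDimensional ℝ V]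
    (A : V →ₗ[ℝ] V →ₗ[ℝ] V →ₗ[ℝ] ℝ)
    (B : V →ₗ[ℝ] V →ₗ[ℝ] V →ₗ[ℝ] V →ₗ[ℝ] ℝ)
    (hB1 : ∀ a b c d : V, B a b c d = - B b a c d)
    (hB2 : ∀ a b c d : V, B a b c d = - B a b d c)
    (hB3 : ∀ a b c d : V, B a b c d = B c d a b)
    (P : Module.Dual ℝ V →ₗ[ℝ] Module.Dual ℝ V →ₗ[ℝ] ℝ)
    (hPsymm : ∀ α β : Module.Dual ℝ V, P α β = P β α)
    (n : V) (z : ℝ) (hz : z ≠ 0) (ζ : V) :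
    -- (1) ℛ′ = ℛ
    (∀ a b : V,
      constraintTensor (z • (A + B ζ)) B (gaugeP P ζ n) (z⁻¹ • n) a b
        = constraintTensor A B P n a b) ∧
    -- (2) J′ = z⁻¹ J
    (∀ b : V,
      constraintTensor (z • (A + B ζ)) B (gaugeP P ζ n) (z⁻¹ • n) (z⁻¹ • n) b
        = z⁻¹ * constraintTensor A B P n n b) ∧
    -- (3) H′ = H + J(ζ)
    (-(1 / 2 : ℝ) * contr (gaugeP P ζ n)
        (constraintTensor (z • (A + B ζ)) B (gaugeP P ζ n) (z⁻¹ • n))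
      = -(1 / 2 : ℝ) * contr P (constraintTensor A B P n)
        + constraintTensor A B P n n ζ) := by
  -- unfolded applications
  have hct : ∀ (A' : V →ₗ[ℝ] V →ₗ[ℝ] V →ₗ[ℝ] ℝ)
      (P' : Module.Dual ℝ V →ₗ[ℝ] Module.Dual ℝ V →ₗ[ℝ] ℝ) (n' a b : V),
      constraintTensor A' B P' n' a b
        = contr P' (sliceB B a b) - A' b a n' - A' a b n' := fun _ _ _ _ _ => rfl
  have hz1 : z * z⁻¹ = 1 := mul_inv_cancel₀ hz
  have part1 : ∀ a b : V,
      constraintTensor (z • (A + B ζ)) B (gaugeP P ζ n) (z⁻¹ • n) a b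
        = constraintTensor A B P n a b := by
    intro a b
    rw [hct, hct, contr_gaugeP]
    have hs1 : sliceB B a b n ζ = B a n b ζ := rfl
    have hs2 : sliceB B a b ζ n = B a ζ b n := rfl
    have hA1 : (z • (A + B ζ)) b a (z⁻¹ • n)
        = z * (z⁻¹ * A b a n + z⁻¹ * B ζ b a n) := by
      simp only [LinearMap.smul_apply, LinearMap.add_apply, map_smul, smul_eq_mul]
      ring
    have hA2 : (z • (A + B ζ)) a b (z⁻¹ • n)
        = z * (z⁻¹ * A a b n + z⁻¹ * B ζ a b n) := by
      simp only [LinearMap.smul_apply, LinearMap.add_apply, map_smul, smul_eq_mul]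
      ring
    rw [hs1, hs2, hA1, hA2]
    have e1 : B ζ b a n = - B a n b ζ := by rw [hB3 ζ b a n, hB2 a n b ζ]; ring
    have e2 : B ζ a b n = - B a ζ b n := by
      rw [hB3 ζ a b n, hB2 b n ζ a, hB3 b n a ζ]
    rw [e1, e2]
    linear_combination (-(A b a n) - A a b n + B a n b ζ + B a ζ b n) * hz1
  have hRR : constraintTensor (z • (A + B ζ)) B (gaugeP P ζ n) (z⁻¹ • n)
      = constraintTensor A B P n := by
    ext a b; exact part1 a b
  have hRsymm : constraintTensor A B P n ζ n = constraintTensor A B P n n ζ := by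
    rw [hct, hct]
    have hfl : sliceB B ζ n = (sliceB B n ζ).flip := by
      ext c d
      show B ζ c n d = B n d ζ c
      rw [hB3]
    rw [hfl, contr_flip P hPsymm]
    ring
  refine ⟨part1, ?_, ?_⟩
  · intro b
    rw [map_smul, LinearMap.smul_apply, smul_eq_mul, part1]
  · rw [hRR, contr_gaugeP]
    rw [hRsymm]
    ring
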